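/- Let K be a field of characteristic 0, δ ∈ K a nonzero element such that −δ is not a square in K, L = K(ω) with ω² = −δ, and σ the nontrivial K-automorphism of L. Let G be a finite group, α an automorphism of G with α∘α = id, and ρ : G → GL_n(L) a representation such that the K-subalgebra of M_n(L) (regarded as a K-algebra) generated by {ρ(g) : g ∈ G} is all of M_n(L), and such that there exists X ∈ GL_n(L) with X·ρ(g)·X⁻¹ = (ρ(α(g)))^σ for all g ∈ G. Let A be the K-linear span of {ρ(g) + ρ(α(g)) : g ∈ G} inside M_n(L). Then: (1) A is closed under matrix multiplication, i.e. A is a K-subalgebra of M_n(L); (2) M_n(L) = A ⊕ ω·A as K-vector spaces; (3) dim_K A = n²; (4) A is a central simple K-algebra, i.e. A has center K·I_n and has no two-sided ideals other than 0 and A. -/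

import Mathlib

/-- The `α`-fixed algebra `A = span_K {ρ(g) + ρ(α g)}` is a central simple
`K`-subalgebra of `M_n(L)` of dimension `n²` with `M_n(L) = A ⊕ ω·A`. -/
theorem fixed_algebra_central_simple
    {K L : Type} [Field K] [CharZero K] [Field L] [Algebra K L]
    (δ : K) (hδ : δ ≠ 0) (hδns : ¬ ∃ c : K, c ^ 2 = -δ)
    (ω : L) (hω : ω ^ 2 = algebraMap K L (-δ))
    (hL : ∀ x : L, ∃ a b : K, x = algebraMap K L a + algebraMap K L b * ω)
    (σ : L ≃ₐ[K] L) (hσne : σ ≠ AlgEquiv.refl) (hσ2 : ∀ x : L, σ (σ x) = x)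
    {G : Type} [Group G] [Finite G]
    (α : G ≃* G) (hα : ∀ g : G, α (α g) = g)
    (n : ℕ) (ρ : G →* Matrix.GeneralLinearGroup (Fin n) L)
    (hgen : Algebra.adjoin K
        (Set.range fun g : G => (ρ g : Matrix (Fin n) (Fin n) L)) = ⊤)
    (hexX : ∃ X : Matrix.GeneralLinearGroup (Fin n) L,
      ∀ g : G, (X : Matrix (Fin n) (Fin n) L) * (ρ g : Matrix (Fin n) (Fin n) L) *
          ((X⁻¹ : Matrix.GeneralLinearGroup (Fin n) L) : Matrix (Fin n) (Fin n) L) =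
          ((ρ (α g) : Matrix (Fin n) (Fin n) L)).map σ)
    (A : Submodule K (Matrix (Fin n) (Fin n) L))
    (hA : A = Submodule.span K
      (Set.range fun g : G =>
        (ρ g : Matrix (Fin n) (Fin n) L) + (ρ (α g) : Matrix (Fin n) (Fin n) L)))
    (ωA : Submodule K (Matrix (Fin n) (Fin n) L))
    (hωA : ∀ x : Matrix (Fin n) (Fin n) L, x ∈ ωA ↔ ∃ a ∈ A, x = ω • a) :
    -- (1) A is a K-subalgebra (closed under multiplication)
    (∀ a ∈ A, ∀ b ∈ A, a * b ∈ A) ∧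
    -- (2) M_n(L) = A ⊕ ω·A as K-vector spaces
    (A ⊔ ωA = ⊤ ∧ A ⊓ ωA = ⊥) ∧
    -- (3) dim_K A = n²
    (Module.finrank K A = n ^ 2) ∧
    -- (4) A is central simple over K: its center is K·1 and it has
    --     no two-sided ideals other than 0 and A
    ((1 : Matrix (Fin n) (Fin n) L) ∈ A ∧
      (∀ a ∈ A, (∀ b ∈ A, a * b = b * a) →
        ∃ c : K, a = algebraMap K L c • (1 : Matrix (Fin n) (Fin n) L)) ∧
      (∀ I : Submodule K (Matrix (Fin n) (Fin n) L), I ≤ A →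
        (∀ a ∈ A, ∀ x ∈ I, a * x ∈ I ∧ x * a ∈ I) → I = ⊥ ∨ I = A)) := by
  classical
  obtain ⟨X, hX⟩ := hexX
  -- basic facts about `ω` and `σ`
  have hinj : Function.Injective (algebraMap K L) := (algebraMap K L).injective
  haveI : CharZero L := charZero_of_injective_algebraMap hinj
  have ωne : ω ≠ 0 := by
    intro h
    apply hδ
    have : algebraMap K L (-δ) = algebraMap K L 0 := by
      rw [← hω, h]; simp
    have := hinj this
    simpa [neg_eq_zero] using this
  have σω : σ ω = -ω := by
    have h1 : (σ ω - ω) * (σ ω + ω) = 0 := by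
      have : σ (ω ^ 2) = ω ^ 2 := by rw [hω, AlgEquiv.commutes]
      rw [map_pow] at this
      ring_nf
      ring_nf at this
      rw [this]; ring
    rcases mul_eq_zero.mp h1 with h | h
    · exfalso
      apply hσne
      have hfix : σ ω = ω := by linear_combination h
      ext x
      obtain ⟨a, b, rfl⟩ := hL x
      simp [map_add, map_mul, AlgEquiv.commutes, hfix]
    · linear_combination h
  have σfix : ∀ x : L, σ x = x → ∃ a : K, x = algebraMap K L a := by
    intro x hx
    obtain ⟨a, b, rfl⟩ := hL x
    have h1 : algebraMap K L a + algebraMap K L b * (-ω)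
        = algebraMap K L a + algebraMap K L b * ω := by
      rw [← σω]; rw [map_add, map_mul, AlgEquiv.commutes, AlgEquiv.commutes] at hx
      exact hx
    have h2 : algebraMap K L b * ω = 0 := by linear_combination (-(1:L)/2) * h1
    rcases mul_eq_zero.mp h2 with h | h
    · refine ⟨a, ?_⟩; rw [h]; simp
    · exact absurd h ωne
  -- the span of the image of ρ is everything
  set S : Set (Matrix (Fin n) (Fin n) L) := Set.range fun g : G => (ρ g : Matrix (Fin n) (Fin n) L) with hS
  have spanS : Submodule.span K S = ⊤ := by
    set T : Submonoid (Matrix (Fin n) (Fin n) L) :=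
      { carrier := S
        one_mem' := ⟨1, by simp⟩
        mul_mem' := by
          rintro _ _ ⟨g, rfl⟩ ⟨h, rfl⟩
          exact ⟨g * h, by simp⟩ }
    have hcl : (↑(Submonoid.closure S) : Set (Matrix (Fin n) (Fin n) L)) = S :=
      Set.Subset.antisymm (Submonoid.closure_le.mpr (le_refl (S : Set (Matrix (Fin n) (Fin n) L))) :
        (Submonoid.closure S : Set (Matrix (Fin n) (Fin n) L)) ⊆ (T : Set (Matrix (Fin n) (Fin n) L))) Submonoid.subset_closure
    have h2 := Algebra.adjoin_eq_span (R := K) (s := S)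
    rw [hgen] at h2
    have h3 : (⊤ : Submodule K (Matrix (Fin n) (Fin n) L)) = Submodule.span K ↑(Submonoid.closure S) := by
      rw [← h2]; rfl
    rw [hcl] at h3
    exact h3.symm
  -- the twisted involution θ
  set Xm : Matrix (Fin n) (Fin n) L := (X : Matrix (Fin n) (Fin n) L) with hXm
  set Xi : Matrix (Fin n) (Fin n) L := ((X⁻¹ : Matrix.GeneralLinearGroup (Fin n) L) : Matrix (Fin n) (Fin n) L) with hXi
  have hIX : Xi * Xm = 1 := X.inv_mul
  have hXI : Xm * Xi = 1 := X.mul_inv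
  set Sm : Matrix (Fin n) (Fin n) L ≃ₐ[K] Matrix (Fin n) (Fin n) L := AlgEquiv.mapMatrix σ with hSm
  set θ : Matrix (Fin n) (Fin n) L → Matrix (Fin n) (Fin n) L := fun M => Xi * Sm M * Xm with hθ
  have θadd : ∀ M N : Matrix (Fin n) (Fin n) L, θ (M + N) = θ M + θ N := by
    intro M N; simp only [hθ, map_add, add_mul, mul_add]
  have θzero : θ 0 = 0 := by simp [hθ]
  have θmul : ∀ M N : Matrix (Fin n) (Fin n) L, θ (M * N) = θ M * θ N := by
    intro M N
    simp only [hθ, map_mul, mul_assoc]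
    rw [← mul_assoc Xm Xi, hXI, one_mul]
  have θone : θ 1 = 1 := by simp only [hθ, map_one, mul_one, hIX]
  have θsmulL : ∀ (c : L) (M : Matrix (Fin n) (Fin n) L), θ (c • M) = σ c • θ M := by
    intro c M
    have h1 : Sm (c • M) = σ c • Sm M := by
      ext i j
      simp [hSm, AlgEquiv.mapMatrix_apply, Matrix.map_apply, Matrix.smul_apply,
        smul_eq_mul, map_mul]
    simp only [hθ, h1, mul_smul_comm, smul_mul_assoc]
  have θK : ∀ (k : K) (M : Matrix (Fin n) (Fin n) L), θ (k • M) = k • θ M := by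
    intro k M
    rw [← algebraMap_smul L k M, θsmulL, AlgEquiv.commutes, algebraMap_smul]
  have θsub : ∀ M N : Matrix (Fin n) (Fin n) L, θ (M - N) = θ M - θ N := by
    intro M N; simp only [hθ, map_sub, sub_mul, mul_sub]
  have θρ : ∀ g : G, θ ((ρ g : Matrix (Fin n) (Fin n) L)) = (ρ (α g) : Matrix (Fin n) (Fin n) L) := by
    intro g
    have h := hX (α g)
    rw [hα] at h
    have hSmg : Sm ((ρ g : Matrix (Fin n) (Fin n) L)) = ((ρ g : Matrix (Fin n) (Fin n) L)).map σ := rfl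
    rw [hθ]
    show Xi * Sm ((ρ g : Matrix (Fin n) (Fin n) L)) * Xm = (ρ (α g) : Matrix (Fin n) (Fin n) L)
    rw [hSmg, ← h]
    calc Xi * (Xm * (ρ (α g) : Matrix (Fin n) (Fin n) L) * Xi) * Xm
        = (Xi * Xm) * (ρ (α g) : Matrix (Fin n) (Fin n) L) * (Xi * Xm) := by noncomm_ring
      _ = (ρ (α g) : Matrix (Fin n) (Fin n) L) := by rw [hIX, one_mul, mul_one]
  have θθ : ∀ M : Matrix (Fin n) (Fin n) L, θ (θ M) = M := by
    intro M
    have hM : M ∈ Submodule.span K S := by rw [spanS]; trivial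
    induction hM using Submodule.span_induction with
    | mem x hx =>
      obtain ⟨g, rfl⟩ := hx
      rw [θρ, θρ, hα]
    | zero => rw [θzero, θzero]
    | add x y hx hy ihx ihy => rw [θadd, θadd, ihx, ihy]
    | smul k x hx ih => rw [θK, θK, ih]
  -- characterization of A and ωA as eigenspaces of θ
  have two_ne : (2 : K) ≠ 0 := two_ne_zero
  have hhalf : ∀ M : Matrix (Fin n) (Fin n) L, M + θ M ∈ A := by
    intro M
    have hM : M ∈ Submodule.span K S := by rw [spanS]; trivial
    induction hM using Submodule.span_induction with
    | mem x hx =>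
      obtain ⟨g, rfl⟩ := hx
      rw [θρ, hA]
      exact Submodule.subset_span ⟨g, rfl⟩
    | zero => rw [θzero, add_zero]; exact A.zero_mem
    | add x y hx hy ihx ihy =>
      rw [θadd, show x + y + (θ x + θ y) = (x + θ x) + (y + θ y) by abel]
      exact A.add_mem ihx ihy
    | smul k x hx ih =>
      rw [θK, ← smul_add]
      exact A.smul_mem k ih
  have memA_iff : ∀ M : Matrix (Fin n) (Fin n) L, M ∈ A ↔ θ M = M := by
    intro M
    constructor
    · intro hM
      rw [hA] at hM
      induction hM using Submodule.span_induction with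
      | mem x hx =>
        obtain ⟨g, rfl⟩ := hx
        rw [θadd, θρ, θρ, hα, add_comm]
      | zero => exact θzero
      | add x y hx hy ihx ihy => rw [θadd, ihx, ihy]
      | smul k x hx ih => rw [θK, ih]
    · intro hM
      have h1 := A.smul_mem (2 : K)⁻¹ (hhalf M)
      rwa [hM, ← two_smul K, smul_smul, inv_mul_cancel₀ two_ne, one_smul] at h1
  have memωA_iff : ∀ M : Matrix (Fin n) (Fin n) L, M ∈ ωA ↔ θ M = -M := by
    intro M
    constructor
    · intro hM
      obtain ⟨a, ha, rfl⟩ := (hωA M).mp hM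
      rw [θsmulL, (memA_iff a).mp ha, σω, neg_smul]
    · intro hM
      have ha : θ (ω⁻¹ • M) = ω⁻¹ • M := by
        rw [θsmulL, map_inv₀, σω, hM, inv_neg, neg_smul, smul_neg, neg_neg]
      refine (hωA M).mpr ⟨ω⁻¹ • M, (memA_iff _).mpr ha, ?_⟩
      rw [smul_smul, mul_inv_cancel₀ ωne, one_smul]
  -- (1)
  have part1 : ∀ a ∈ A, ∀ b ∈ A, a * b ∈ A := by
    intro a ha b hb
    exact (memA_iff _).mpr (by rw [θmul, (memA_iff a).mp ha, (memA_iff b).mp hb])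
  -- (2)
  have hsup : A ⊔ ωA = ⊤ := by
    rw [eq_top_iff]
    intro M _
    have key : (2 : K)⁻¹ • (M + θ M) + (2 : K)⁻¹ • (M - θ M) = M := by
      rw [← smul_add, show (M + θ M) + (M - θ M) = (2 : K) • M by
        rw [two_smul]; abel, smul_smul, inv_mul_cancel₀ two_ne, one_smul]
    rw [← key]
    refine Submodule.add_mem _ (Submodule.mem_sup_left ?_) (Submodule.mem_sup_right ?_)
    · exact A.smul_mem _ (hhalf M)
    · refine ωA.smul_mem _ ((memωA_iff _).mpr ?_)
      rw [θsub, θθ, neg_sub]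
  have hinf : A ⊓ ωA = ⊥ := by
    rw [eq_bot_iff]
    intro M hM
    have h1 := (memA_iff M).mp hM.1
    have h2 := (memωA_iff M).mp hM.2
    have h3 : (2 : K) • M = 0 := by
      rw [two_smul]
      nth_rewrite 1 [← h1]
      rw [h2, neg_add_cancel]
    have h4 := congrArg (fun z => (2 : K)⁻¹ • z) h3
    simp only [smul_smul, inv_mul_cancel₀ two_ne, one_smul, smul_zero] at h4
    simpa using h4
  -- (3) dimension count
  have memspanL : ∀ x : L, x ∈ Submodule.span K ({1, ω} : Set L) := by
    intro x
    obtain ⟨a, b, rfl⟩ := hL x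
    have h1 : algebraMap K L a = a • (1 : L) := by
      rw [Algebra.algebraMap_eq_smul_one]
    have h2 : algebraMap K L b * ω = b • ω := by
      rw [Algebra.smul_def]
    rw [h1, h2]
    exact Submodule.add_mem _
      (Submodule.smul_mem _ _ (Submodule.subset_span (by simp)))
      (Submodule.smul_mem _ _ (Submodule.subset_span (by simp)))
  haveI : Module.Finite K L := by
    refine ⟨⟨{1, ω}, ?_⟩⟩
    rw [eq_top_iff]
    intro x _
    have := memspanL x
    simpa using this
  have finrankL : Module.finrank K L = 2 := by
    have hind : LinearIndependent K ![(1 : L), ω] := by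
      rw [linearIndependent_fin2]
      refine ⟨by simpa using ωne, ?_⟩
      intro a ha
      simp only [Matrix.cons_val_one, Matrix.head_cons, Matrix.cons_val_zero] at ha
      rw [Algebra.smul_def] at ha
      apply hδns
      refine ⟨a⁻¹, ?_⟩
      apply hinj
      rw [← hω, map_pow, show ω = algebraMap K L a⁻¹ by
        rw [map_inv₀]; exact eq_inv_of_mul_eq_one_right ha]
    have hsp : ⊤ ≤ Submodule.span K (Set.range ![(1 : L), ω]) := by
      intro x _
      have h := memspanL x
      have : Set.range ![(1 : L), ω] = {1, ω} := by
        simp [Matrix.range_cons, Matrix.range_empty]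
        exact Set.pair_comm ω 1
      rwa [this]
    let b : Module.Basis (Fin 2) K L := Module.Basis.mk hind hsp
    rw [Module.finrank_eq_card_basis b, Fintype.card_fin]
  haveI : Module.Finite K (Matrix (Fin n) (Fin n) L) := Module.Finite.trans L (Matrix (Fin n) (Fin n) L)
  have finrankMat : Module.finrank K (Matrix (Fin n) (Fin n) L) = 2 * n ^ 2 := by
    have h1 : Module.finrank K L * Module.finrank L (Matrix (Fin n) (Fin n) L) = Module.finrank K (Matrix (Fin n) (Fin n) L) :=
      Module.finrank_mul_finrank K L (Matrix (Fin n) (Fin n) L)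
    have h2 : Module.finrank L (Matrix (Fin n) (Fin n) L) = n * n := by
      rw [Module.finrank_matrix]
      simp
    rw [← h1, h2, finrankL]
    ring
  -- ω-multiplication as a K-linear map
  set f : Matrix (Fin n) (Fin n) L →ₗ[K] Matrix (Fin n) (Fin n) L :=
    { toFun := fun M => ω • M
      map_add' := fun a b => smul_add ω a b
      map_smul' := fun k M => smul_comm ω k M } with hf
  have finj : Function.Injective f := by
    intro a b h
    have h2 := congrArg (fun z => ω⁻¹ • z) h
    simpa [hf, smul_smul, inv_mul_cancel₀ ωne] using h2
  have hmapEq : ωA = A.map f := by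
    ext x
    rw [hωA, Submodule.mem_map]
    exact ⟨fun ⟨a, ha, hx⟩ => ⟨a, ha, hx.symm⟩, fun ⟨a, ha, hx⟩ => ⟨a, ha, hx.symm⟩⟩
  have frk : Module.finrank K ωA = Module.finrank K A := by
    rw [hmapEq]
    exact (LinearEquiv.finrank_eq (Submodule.equivMapOfInjective f finj A)).symm
  have part3 : Module.finrank K A = n ^ 2 := by
    have h1 := Submodule.finrank_sup_add_finrank_inf_eq A ωA
    rw [hsup, hinf, finrank_top, finrankMat, finrank_bot, frk] at h1
    omega
  -- (4a)
  have oneA : (1 : Matrix (Fin n) (Fin n) L) ∈ A := (memA_iff 1).mpr θone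
  -- (4b) center
  have part4b : ∀ a ∈ A, (∀ b ∈ A, a * b = b * a) →
      ∃ c : K, a = algebraMap K L c • (1 : Matrix (Fin n) (Fin n) L) := by
    intro a ha hcomm
    rcases Nat.eq_zero_or_pos n with hn | hn
    · subst hn
      haveI : Subsingleton (Matrix (Fin 0) (Fin 0) L) :=
        ⟨fun M N => by ext i j; exact i.elim0⟩
      exact ⟨0, Subsingleton.elim _ _⟩
    haveI : Nonempty (Fin n) := ⟨⟨0, hn⟩⟩
    have hall : ∀ M : Matrix (Fin n) (Fin n) L, a * M = M * a := by
      intro M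
      have hM : M ∈ A ⊔ ωA := by rw [hsup]; trivial
      obtain ⟨p, hp, q, hq, rfl⟩ := Submodule.mem_sup.mp hM
      obtain ⟨b, hb, rfl⟩ := (hωA q).mp hq
      rw [mul_add, add_mul, hcomm p hp, mul_smul_comm, smul_mul_assoc,
        hcomm b hb]
    obtain ⟨c, hc⟩ := Matrix.mem_range_scalar_of_commute_single
      (M := a) (fun i j _ => (hall _).symm)
    have hscal : a = c • (1 : Matrix (Fin n) (Fin n) L) := by
      rw [← hc]
      ext i j
      by_cases hij : i = j
      · subst hij
        simp [Matrix.scalar_apply, Matrix.smul_apply, Matrix.one_apply_eq]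
      · simp [Matrix.scalar_apply, Matrix.smul_apply, Matrix.one_apply_ne hij,
          Matrix.diagonal_apply_ne _ hij]
    have hθa : θ a = a := (memA_iff a).mp ha
    have hσc : σ c = c := by
      rw [hscal, θsmulL, θone] at hθa
      have := congrFun (congrFun hθa (Classical.arbitrary (Fin n)))
        (Classical.arbitrary (Fin n))
      simpa [Matrix.smul_apply, Matrix.one_apply_eq, smul_eq_mul] using this
    obtain ⟨k, hk⟩ := σfix c hσc
    exact ⟨k, by rw [hscal, hk]⟩
  -- (4c) simplicity
  have part4c : ∀ I : Submodule K (Matrix (Fin n) (Fin n) L), I ≤ A →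
      (∀ a ∈ A, ∀ x ∈ I, a * x ∈ I ∧ x * a ∈ I) → I = ⊥ ∨ I = A := by
    intro I hIA hI2
    by_cases hbot : I = ⊥
    · exact Or.inl hbot
    right
    obtain ⟨x0, hx0I, hx0ne⟩ := Submodule.exists_mem_ne_zero_of_ne_bot hbot
    set J : Submodule K (Matrix (Fin n) (Fin n) L) := I ⊔ I.map f with hJ
    have hIJ : I ≤ J := le_sup_left
    have ωJ : ∀ z ∈ J, ω • z ∈ J := by
      intro z hz
      obtain ⟨i, hi, q, hq, rfl⟩ := Submodule.mem_sup.mp hz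
      obtain ⟨y, hy, rfl⟩ := Submodule.mem_map.mp hq
      have h1 : ω • (i + f y) = f i + (-δ : K) • y := by
        simp only [hf, LinearMap.coe_mk, AddHom.coe_mk, smul_add, smul_smul]
        congr 1
        rw [← sq, hω, algebraMap_smul]
      rw [h1]
      exact J.add_mem (Submodule.mem_sup_right (Submodule.mem_map_of_mem hi))
        (hIJ (I.smul_mem _ hy))
    have JsmulL : ∀ (c : L), ∀ z ∈ J, c • z ∈ J := by
      intro c z hz
      obtain ⟨a, b, rfl⟩ := hL c
      rw [add_smul, mul_smul, algebraMap_smul, algebraMap_smul]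
      exact J.add_mem (J.smul_mem a hz) (J.smul_mem b (ωJ z hz))
    have JmulI : ∀ M : Matrix (Fin n) (Fin n) L, ∀ x ∈ I, M * x ∈ J ∧ x * M ∈ J := by
      intro M x hx
      have hM : M ∈ A ⊔ ωA := by rw [hsup]; trivial
      obtain ⟨p, hp, q, hq, rfl⟩ := Submodule.mem_sup.mp hM
      obtain ⟨b, hb, rfl⟩ := (hωA q).mp hq
      constructor
      · rw [add_mul, smul_mul_assoc]
        exact J.add_mem (hIJ (hI2 p hp x hx).1)
          (ωJ _ (hIJ (hI2 b hb x hx).1))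
      · rw [mul_add, mul_smul_comm]
        exact J.add_mem (hIJ (hI2 p hp x hx).2)
          (ωJ _ (hIJ (hI2 b hb x hx).2))
    have Jmul : ∀ M : Matrix (Fin n) (Fin n) L, ∀ z ∈ J, M * z ∈ J ∧ z * M ∈ J := by
      intro M z hz
      obtain ⟨i, hi, q, hq, rfl⟩ := Submodule.mem_sup.mp hz
      obtain ⟨y, hy, rfl⟩ := Submodule.mem_map.mp hq
      have hfy : (f y : Matrix (Fin n) (Fin n) L) = ω • y := rfl
      constructor
      · rw [mul_add, hfy, mul_smul_comm]
        exact J.add_mem ((JmulI M i hi).1) (ωJ _ ((JmulI M y hy).1))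
      · rw [add_mul, hfy, smul_mul_assoc]
        exact J.add_mem ((JmulI M i hi).2) (ωJ _ ((JmulI M y hy).2))
    -- J = ⊤ by the matrix units argument
    have hent : ∃ i j, x0 i j ≠ 0 := by
      by_contra h
      push_neg at h
      exact hx0ne (by ext i j; exact h i j)
    obtain ⟨i0, j0, hentry⟩ := hent
    have key : ∀ (k l : Fin n) (c : L), Matrix.single k l c ∈ J := by
      intro k l c
      have hA1 : Matrix.single k i0 (1 : L) * x0 ∈ J :=
        (Jmul (Matrix.single k i0 1) x0 (hIJ hx0I)).1
      have h1 : Matrix.single k i0 (1 : L) * x0 * Matrix.single j0 l 1 ∈ J :=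
        (Jmul (Matrix.single j0 l 1) _ hA1).2
      have h2 : Matrix.single k i0 (1 : L) * x0 * Matrix.single j0 l 1
          = Matrix.single k l (x0 i0 j0) := by
        ext a b
        by_cases hb : b = l
        · subst hb
          rw [Matrix.mul_single_apply_same, mul_one]
          by_cases ha : a = k
          · subst ha
            rw [Matrix.single_mul_apply_same, one_mul,
              Matrix.single_apply_same]
          · rw [Matrix.single_mul_apply_of_ne (h := ha),
              Matrix.single_apply_of_row_ne (Ne.symm ha)]
        · rw [Matrix.mul_single_apply_of_ne (hbj := hb),
            Matrix.single_apply_of_col_ne _ _ (Ne.symm hb)]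
      have h3 : Matrix.single k l c
          = (c * (x0 i0 j0)⁻¹) • Matrix.single k l (x0 i0 j0) := by
        rw [Matrix.smul_single, smul_eq_mul, mul_assoc,
          inv_mul_cancel₀ hentry, mul_one]
      rw [h3, ← h2]
      exact JsmulL _ _ h1
    have Jtop : J = ⊤ := by
      rw [eq_top_iff]
      intro M _
      rw [Matrix.matrix_eq_sum_single M]
      exact Submodule.sum_mem _ fun i _ => Submodule.sum_mem _ fun j _ => key i j _
    have AleI : A ≤ I := by
      intro a ha
      have haJ : a ∈ J := by rw [Jtop]; trivial
      obtain ⟨p, hp, q, hq, hpq⟩ := Submodule.mem_sup.mp haJ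
      obtain ⟨y, hy, rfl⟩ := Submodule.mem_map.mp hq
      have hfy : (f y : Matrix (Fin n) (Fin n) L) = ω • y := rfl
      have h1 : ω • y ∈ ωA := (hωA _).mpr ⟨y, hIA hy, rfl⟩
      have h2 : ω • y ∈ A := by
        have : ω • y = a - p := by rw [← hpq, hfy]; abel
        rw [this]
        exact A.sub_mem ha (hIA hp)
      have h3 : ω • y = 0 := by
        have h4 : ω • y ∈ A ⊓ ωA := ⟨h2, h1⟩
        rw [hinf] at h4
        simpa using h4
      have : a = p := by rw [← hpq, hfy, h3, add_zero]
      rw [this]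
      exact hp
    exact le_antisymm hIA AleI
  exact ⟨part1, ⟨hsup, hinf⟩, part3, oneA, part4b, part4c⟩
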